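/- Let ψ: ℝ → ℝ be C¹ with ψ(0)=1, ψ even, and suppose there exist C>0 and δ>1 such that |ψ(x)| + |x·ψ'(x)| ≤ C·(1+x²)^{-δ/2} for all x ∈ ℝ. Let μ be a probability measure on ℝ, 0 < α ≤ 1, and x ∈ ℝ. If D_μ^α(x) := limsup_{ε→0⁺} μ((x−ε, x+ε))/(2ε)^α is finite, then C_{μ,ψ}^α(x) := limsup_{a→0⁺} a^{−α}·(ψ_a * μ)(x) is finite, where ψ_a(x) = ψ(x/a). -/

import Mathlib

open MeasureTheory Filter Real Set Topology


lemma ball_bound (μ : Measure ℝ) [IsProbabilityMeasure μ]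
    (α : ℝ) (hα0 : 0 < α) (x : ℝ)
    (hD : Filter.limsup
        (fun ε : ℝ => (((μ (Ioo (x - ε) (x + ε))).toReal / (2 * ε) ^ α : ℝ) : EReal))
        (𝓝[>] 0) < ⊤) :
    ∃ M > (0:ℝ), ∀ r > (0:ℝ), μ (Ioo (x - r) (x + r)) ≤ ENNReal.ofReal (M * (2*r) ^ α) := by
  obtain ⟨M₀, hM₀lt, -⟩ := EReal.exists_between_coe_real hD
  have hev := eventually_lt_of_limsup_lt hM₀lt
  rw [eventually_nhdsWithin_iff, Metric.eventually_nhds_iff] at hev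
  obtain ⟨ε₀, hε₀, hevs⟩ := hev
  refine ⟨max (max M₀ ((2*ε₀)^(-α))) 1, lt_of_lt_of_le one_pos (le_max_right _ _), ?_⟩
  intro r hr
  set M : ℝ := max (max M₀ ((2*ε₀)^(-α))) 1 with hM
  have h2r : (0:ℝ) < (2*r) ^ α := rpow_pos_of_pos (by linarith) α
  by_cases hcase : r < ε₀
  · have := hevs (y := r) (by rw [Real.dist_eq, sub_zero, abs_of_pos hr]; exact hcase) hr
    rw [EReal.coe_lt_coe_iff] at this
    have h1 : (μ (Ioo (x - r) (x + r))).toReal ≤ M₀ * (2*r)^α := by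
      rw [div_lt_iff₀ h2r] at this; linarith
    have h2 : M₀ * (2*r)^α ≤ M * (2*r)^α := by
      apply mul_le_mul_of_nonneg_right _ h2r.le
      exact le_trans (le_max_left _ _) (le_max_left _ _)
    have hMpos : (0:ℝ) < M := lt_of_lt_of_le one_pos (le_max_right _ _)
    rw [ENNReal.le_ofReal_iff_toReal_le (measure_ne_top μ _) (mul_pos hMpos h2r).le]
    linarith
  · push_neg at hcase
    have h1 : (1:ℝ) ≤ (2*ε₀)^(-α) * (2*r)^α := by
      have : (2*ε₀)^α ≤ (2*r)^α := rpow_le_rpow (by linarith) (by linarith) hα0.le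
      have hpos : (0:ℝ) < (2*ε₀)^α := rpow_pos_of_pos (by linarith) α
      rw [Real.rpow_neg (by linarith)]
      calc (1:ℝ) = (2*ε₀)^α / (2*ε₀)^α := (div_self hpos.ne').symm
        _ ≤ (2*r)^α / (2*ε₀)^α := by gcongr
        _ = ((2*ε₀)^α)⁻¹ * (2*r)^α := by ring
    have h2 : (2*ε₀)^(-α) * (2*r)^α ≤ M * (2*r)^α := by
      apply mul_le_mul_of_nonneg_right _ h2r.le
      exact le_trans (le_max_right _ _) (le_max_left _ _)
    calc μ (Ioo (x - r) (x + r)) ≤ 1 := prob_le_one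
      _ = ENNReal.ofReal 1 := by simp
      _ ≤ ENNReal.ofReal (M * (2*r)^α) := ENNReal.ofReal_le_ofReal (by linarith)


lemma lint_bound (ψ : ℝ → ℝ) (hcont : Continuous ψ) (C δ : ℝ) (hC : 0 < C) (hδ : 1 < δ)
    (hbd : ∀ u : ℝ, |ψ u| ≤ C * (1 + u ^ 2) ^ (-δ/2))
    (μ : Measure ℝ) [IsProbabilityMeasure μ] (α M : ℝ) (hα0 : 0 < α) (hα1 : α ≤ 1) (hM : 0 < M)
    (x : ℝ) (hball : ∀ r > (0:ℝ), μ (Ioo (x - r) (x + r)) ≤ ENNReal.ofReal (M * (2*r) ^ α))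
    (a : ℝ) (ha : 0 < a) :
    ∫⁻ y, ENNReal.ofReal |ψ ((x - y)/a)| ∂μ
      ≤ ENNReal.ofReal ((C * M * 4 ^ α / (1 - 2 ^ (α-δ))) * a ^ α) := by
  set S : ℕ → Set ℝ := fun k => Ioo (x - 2^(k+1)*a) (x + 2^(k+1)*a) with hS
  have hmemS : ∀ (k : ℕ) (y : ℝ), y ∈ S k ↔ |x - y| < 2^(k+1)*a := by
    intro k y
    rw [hS]; simp only [mem_Ioo, abs_sub_lt_iff]
    constructor <;> intro h <;> constructor <;> linarith [h.1, h.2]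
  have hSmono : Monotone S := by
    intro i j hij
    intro y hy
    rw [hmemS] at hy ⊢
    have : (2:ℝ)^(i+1) ≤ 2^(j+1) := by
      apply pow_le_pow_right₀ (by norm_num) (by omega)
    nlinarith
  have hSmeas : ∀ k, MeasurableSet (S k) := fun k => measurableSet_Ioo
  set T : ℕ → Set ℝ := disjointed S with hT
  have hTmeas : ∀ k, MeasurableSet (T k) := MeasurableSet.disjointed hSmeas
  have hTdisj : Pairwise (Function.onFun Disjoint T) := disjoint_disjointed S
  have hTunion : (⋃ k, T k) = univ := by
    rw [hT, iUnion_disjointed]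
    apply eq_univ_of_forall
    intro y
    obtain ⟨n, hn⟩ := exists_nat_gt (|x - y| / a)
    refine mem_iUnion.2 ⟨n, (hmemS n y).2 ?_⟩
    have h1 : |x - y| < n * a := by rwa [div_lt_iff₀ ha] at hn
    have h2 : (n:ℝ) ≤ 2^(n+1) := by
      calc (n:ℝ) ≤ 2^n := by exact_mod_cast (Nat.lt_two_pow_self (n := n)).le
        _ ≤ 2^(n+1) := by apply pow_le_pow_right₀ (by norm_num) (by omega)
    nlinarith
  -- pointwise bound on each piece
  have hpt : ∀ (k : ℕ), ∀ y ∈ T k, |ψ ((x - y)/a)| ≤ C * 2 ^ (-(k:ℝ)*δ) := by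
    intro k y hy
    match k with
    | 0 =>
      simp only [Nat.cast_zero, neg_zero, zero_mul, rpow_zero, mul_one]
      calc |ψ ((x-y)/a)| ≤ C * (1 + ((x-y)/a) ^ 2) ^ (-δ/2) := hbd _
        _ ≤ C * 1 := by
            gcongr
            exact rpow_le_one_of_one_le_of_nonpos (by nlinarith [sq_nonneg ((x-y)/a)])
              (by linarith)
        _ = C := mul_one C
    | (k+1) =>
      have hy' : y ∈ S (k+1) \ S k := by rwa [hT, hSmono.disjointed_add_one] at hy
      have hnot : ¬ (|x - y| < 2^(k+1)*a) := fun h => hy'.2 ((hmemS k y).2 h)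
      push_neg at hnot
      have hu : (2:ℝ)^(k+1) ≤ |(x - y)/a| := by
        rw [abs_div, abs_of_pos ha, le_div_iff₀ ha]
        exact hnot
      have hsq : ((2:ℝ)^(k+1))^2 ≤ 1 + ((x-y)/a) ^ 2 := by
        have := sq_abs ((x-y)/a)
        nlinarith [pow_pos (show (0:ℝ) < 2 by norm_num) (k+1)]
      have hbase : (0:ℝ) < ((2:ℝ)^(k+1))^2 := by positivity
      calc |ψ ((x-y)/a)| ≤ C * (1 + ((x-y)/a) ^ 2) ^ (-δ/2) := hbd _
        _ ≤ C * (((2:ℝ)^(k+1))^2) ^ (-δ/2) :=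
            mul_le_mul_of_nonneg_left (rpow_le_rpow_of_nonpos hbase hsq (by linarith)) hC.le
        _ = C * 2 ^ (-(↑(k+1):ℝ)*δ) := by
            rw [← pow_mul, ← Real.rpow_natCast 2 ((k+1)*2), ← Real.rpow_mul (by norm_num),
              show ((((k+1)*2 : ℕ)):ℝ) * (-δ/2) = -(↑(k+1):ℝ)*δ by push_cast; ring]
  -- measure bound on each piece
  have hμT : ∀ k : ℕ, μ (T k) ≤ ENNReal.ofReal (M * (2*(2^(k+1)*a)) ^ α) := by
    intro k
    calc μ (T k) ≤ μ (S k) := measure_mono (disjointed_subset S k)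
      _ ≤ ENNReal.ofReal (M * (2*(2^(k+1)*a)) ^ α) := hball _ (by positivity)
  -- combine
  have key : ∀ k : ℕ, ∫⁻ y in T k, ENNReal.ofReal |ψ ((x - y)/a)| ∂μ
      ≤ ENNReal.ofReal ((C * M * 4 ^ α * a ^ α) * (2 ^ (α-δ))^k) := by
    intro k
    have step1 : ∫⁻ y in T k, ENNReal.ofReal |ψ ((x - y)/a)| ∂μ
        ≤ ∫⁻ _ in T k, ENNReal.ofReal (C * 2 ^ (-(k:ℝ)*δ)) ∂μ := by
      apply setLIntegral_mono measurable_const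
      intro y hy
      exact ENNReal.ofReal_le_ofReal (hpt k y hy)
    rw [setLIntegral_const] at step1
    have step2 : ENNReal.ofReal (C * 2 ^ (-(k:ℝ)*δ)) * μ (T k)
        ≤ ENNReal.ofReal (C * 2 ^ (-(k:ℝ)*δ)) * ENNReal.ofReal (M * (2*(2^(k+1)*a)) ^ α) :=
      mul_le_mul_right (hμT k) _
    rw [← ENNReal.ofReal_mul (by positivity)] at step2
    refine le_trans step1 (le_trans step2 (ENNReal.ofReal_le_ofReal (le_of_eq ?_)))
    -- real algebra
    have e1 : (2*((2:ℝ)^(k+1)*a)) ^ α = (2:ℝ)^(((k:ℝ)+2)*α) * a ^ α := by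
      have : 2*((2:ℝ)^(k+1)*a) = (2:ℝ)^(k+2)*a := by ring
      rw [this, Real.mul_rpow (by positivity) ha.le, ← Real.rpow_natCast 2 (k+2),
        ← Real.rpow_mul (by norm_num)]
      push_cast; ring_nf
    rw [e1]
    rw [show C * 2 ^ (-(k:ℝ)*δ) * (M * ((2:ℝ)^(((k:ℝ)+2)*α) * a ^ α))
        = (C * M * a ^ α) * (2 ^ (-(k:ℝ)*δ) * 2 ^ (((k:ℝ)+2)*α)) by ring]
    rw [← Real.rpow_add (by norm_num : (0:ℝ) < 2)]
    have e2 : -(k:ℝ)*δ + ((k:ℝ)+2)*α = (α-δ)*(k:ℝ) + 2*α := by ring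
    rw [e2, Real.rpow_add (by norm_num : (0:ℝ) < 2), Real.rpow_mul (by norm_num) _ (k:ℝ),
      Real.rpow_natCast]
    have e3 : (2:ℝ) ^ (2*α) = 4 ^ α := by
      rw [Real.rpow_mul (by norm_num), show ((2:ℝ)^(2:ℝ)) = 4 by
        rw [show (2:ℝ) = ((2:ℕ):ℝ) by norm_num, Real.rpow_natCast]; norm_num]
    rw [e3]; ring
  calc ∫⁻ y, ENNReal.ofReal |ψ ((x - y)/a)| ∂μ
      = ∫⁻ y in ⋃ k, T k, ENNReal.ofReal |ψ ((x - y)/a)| ∂μ := by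
        rw [hTunion, setLIntegral_univ]
    _ = ∑' k, ∫⁻ y in T k, ENNReal.ofReal |ψ ((x - y)/a)| ∂μ :=
        lintegral_iUnion hTmeas hTdisj _
    _ ≤ ∑' k, ENNReal.ofReal ((C * M * 4 ^ α * a ^ α) * (2 ^ (α-δ))^k) :=
        ENNReal.tsum_le_tsum key
    _ = ENNReal.ofReal ((C * M * 4 ^ α / (1 - 2 ^ (α-δ))) * a ^ α) := by
        have hq0 : (0:ℝ) ≤ 2 ^ (α-δ) := by positivity
        have hq1 : (2:ℝ) ^ (α-δ) < 1 :=
          rpow_lt_one_of_one_lt_of_neg (by norm_num) (by linarith)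
        have hc0 : (0:ℝ) ≤ C * M * 4 ^ α * a ^ α := by positivity
        calc ∑' (k:ℕ), ENNReal.ofReal ((C * M * 4 ^ α * a ^ α) * (2 ^ (α-δ))^k)
            = ∑' (k:ℕ), ENNReal.ofReal (C * M * 4 ^ α * a ^ α) * (ENNReal.ofReal (2 ^ (α-δ)))^k := by
              congr 1; funext k
              rw [ENNReal.ofReal_mul hc0, ENNReal.ofReal_pow hq0]
          _ = ENNReal.ofReal (C * M * 4 ^ α * a ^ α) * (1 - ENNReal.ofReal (2 ^ (α-δ)))⁻¹ := by
              rw [ENNReal.tsum_mul_left, ENNReal.tsum_geometric]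
          _ = ENNReal.ofReal (C * M * 4 ^ α * a ^ α) * ENNReal.ofReal ((1 - 2 ^ (α-δ))⁻¹) := by
              congr 1
              rw [← ENNReal.ofReal_one, ← ENNReal.ofReal_sub _ hq0,
                ENNReal.ofReal_inv_of_pos (by linarith)]
          _ = ENNReal.ofReal ((C * M * 4 ^ α / (1 - 2 ^ (α-δ))) * a ^ α) := by
              rw [← ENNReal.ofReal_mul hc0]
              congr 1; field_simp


/-- Theorem 2.9 (first half): if `D_μ^α(x) = limsup_{ε→0⁺} μ((x-ε,x+ε))/(2ε)^α` is finite,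
then so is `C_{μ,ψ}^α(x) = limsup_{a→0⁺} a^{-α} (ψ_a * μ)(x)`. The limsups are taken in
the extended reals, finiteness meaning `< ⊤`. -/
theorem upper_alpha_density_finite_implies_conv_finite
    (ψ : ℝ → ℝ) (hC1 : ContDiff ℝ 1 ψ) (hψ0 : ψ 0 = 1)
    (heven : ∀ x : ℝ, ψ (-x) = ψ x)
    (hdecay : ∃ C > (0:ℝ), ∃ δ > (1:ℝ), ∀ x : ℝ,
      |ψ x| + |x * deriv ψ x| ≤ C * (1 + x ^ 2) ^ (-δ / 2))
    (μ : Measure ℝ) [IsProbabilityMeasure μ]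
    (α : ℝ) (hα0 : 0 < α) (hα1 : α ≤ 1) (x : ℝ)
    (hD : Filter.limsup
        (fun ε : ℝ => (((μ (Ioo (x - ε) (x + ε))).toReal / (2 * ε) ^ α : ℝ) : EReal))
        (𝓝[>] 0) < ⊤) :
    Filter.limsup
        (fun a : ℝ => ((a ^ (-α) * ∫ y : ℝ, ψ ((x - y) / a) ∂μ : ℝ) : EReal))
        (𝓝[>] 0) < ⊤ := by
  obtain ⟨C, hC, δ, hδ, hdec⟩ := hdecay
  have hbd : ∀ u : ℝ, |ψ u| ≤ C * (1 + u ^ 2) ^ (-δ/2) := by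
    intro u
    have := hdec u
    have h2 := abs_nonneg (u * deriv ψ u)
    calc |ψ u| ≤ |ψ u| + |u * deriv ψ u| := by linarith
      _ ≤ C * (1 + u ^ 2) ^ (-δ/2) := by rw [show -δ/2 = -δ/2 by rfl]; exact this
  obtain ⟨M, hM, hball⟩ := ball_bound μ α hα0 x hD
  set K : ℝ := C * M * 4 ^ α / (1 - 2 ^ (α-δ)) with hK
  have hcont : Continuous ψ := hC1.continuous
  -- eventual bound
  have hev : ∀ᶠ a in 𝓝[>] (0:ℝ),
      ((a ^ (-α) * ∫ y : ℝ, ψ ((x - y) / a) ∂μ : ℝ) : EReal) ≤ (K : EReal) := by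
    apply eventually_nhdsWithin_of_forall
    intro a ha
    rw [Set.mem_Ioi] at ha
    rw [EReal.coe_le_coe_iff]
    have hmeas : AEStronglyMeasurable (fun y => ψ ((x - y)/a)) μ :=
      (hcont.comp (by fun_prop)).aestronglyMeasurable
    have habs1 : ∀ y : ℝ, |ψ ((x - y)/a)| ≤ C := by
      intro y
      calc |ψ ((x - y)/a)| ≤ C * (1 + ((x-y)/a) ^ 2) ^ (-δ/2) := hbd _
        _ ≤ C * 1 := by
            apply mul_le_mul_of_nonneg_left _ hC.le
            exact rpow_le_one_of_one_le_of_nonpos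
              (by nlinarith [sq_nonneg ((x-y)/a)]) (by linarith)
        _ = C := mul_one C
    have hint : Integrable (fun y => ψ ((x - y)/a)) μ :=
      Integrable.mono' (integrable_const C) hmeas (ae_of_all _ fun y => by
        rw [Real.norm_eq_abs]; exact habs1 y)
    have hintabs : Integrable (fun y => |ψ ((x - y)/a)|) μ := hint.abs
    have h1 : (∫ y : ℝ, ψ ((x - y)/a) ∂μ) ≤ ∫ y : ℝ, |ψ ((x - y)/a)| ∂μ :=
      integral_mono hint hintabs fun y => le_abs_self _
    have h2 : (∫ y : ℝ, |ψ ((x - y)/a)| ∂μ)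
        = (∫⁻ y, ENNReal.ofReal |ψ ((x - y)/a)| ∂μ).toReal := by
      rw [integral_eq_lintegral_of_nonneg_ae (ae_of_all _ fun y => abs_nonneg _)
        hintabs.aestronglyMeasurable]
    have h3 := lint_bound ψ hcont C δ hC hδ hbd μ α M hα0 hα1 hM x hball a ha
    have hKa : (0:ℝ) ≤ K * a ^ α := by
      apply mul_nonneg _ (rpow_pos_of_pos ha α).le
      apply div_nonneg (by positivity)
      have : (2:ℝ) ^ (α-δ) < 1 := rpow_lt_one_of_one_lt_of_neg (by norm_num) (by linarith)
      linarith
    have h4 : (∫⁻ y, ENNReal.ofReal |ψ ((x - y)/a)| ∂μ).toReal ≤ K * a ^ α := by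
      apply ENNReal.toReal_le_of_le_ofReal hKa h3
    have h5 : (∫ y : ℝ, ψ ((x - y)/a) ∂μ) ≤ K * a ^ α := by
      rw [h2] at h1; linarith
    have ha' : (0:ℝ) < a ^ (-α) := rpow_pos_of_pos ha _
    calc a ^ (-α) * ∫ y : ℝ, ψ ((x - y)/a) ∂μ ≤ a ^ (-α) * (K * a ^ α) :=
          mul_le_mul_of_nonneg_left h5 ha'.le
      _ = K * (a ^ (-α) * a ^ α) := by ring
      _ = K := by rw [← Real.rpow_add ha, neg_add_cancel, Real.rpow_zero, mul_one]
  have : Filter.limsup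
      (fun a : ℝ => ((a ^ (-α) * ∫ y : ℝ, ψ ((x - y) / a) ∂μ : ℝ) : EReal))
      (𝓝[>] 0) ≤ (K : EReal) := limsup_le_of_le (by isBoundedDefault) hev
  exact lt_of_le_of_lt this (EReal.coe_lt_top K)
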